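/- Let n ≥ 6 and let t = ⌈log₂ n⌉. Then for q = 3, for every a with 0 ≤ a ≤ n−1 and every b ∈ Z_3, the ternary Varshamov–Tenengolts code VT_{a,b}(n) satisfies |VT_{a,b}(n)| ≥ 2^{2(t−3)} · 3^{n−3t+3}. -/

import Mathlib

/-- VT syndrome of the auxiliary binary sequence of a q-ary sequence `s_0 ⋯ s_{n-1}`:
the auxiliary bit `α_i` (1 ≤ i ≤ n-1) is 1 iff `s_i ≥ s_{i-1}`, and
`syn(A_S) = (∑ i, i · α_i) mod n`. -/
def qsyn {n q : ℕ} (S : Fin n → Fin q) : ℕ :=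
  (∑ i : Fin (n - 1), (i.val + 1) *
    (if S ⟨i.val, by have := i.isLt; omega⟩ ≤ S ⟨i.val + 1, by have := i.isLt; omega⟩
      then 1 else 0)) % n

/-- Modular sum of a q-ary sequence: `sum(S) = (∑ i, s_i) mod q`. -/
def qsum {n q : ℕ} (S : Fin n → Fin q) : ℕ :=
  (∑ i : Fin n, (S i).val) % q

/-- The q-ary VT code `VT_{a,b}(n)`. -/
def VTq (n q : ℕ) (a b : ℕ) : Finset (Fin n → Fin q) :=
  Finset.univ.filter fun S => qsyn S = a ∧ qsum S = b


namespace VTaux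

/-- low-region table: for `r < 8`, `s < 3`, a 6-tuple `v` with `v 5 = 0`,
`∑_{i<5} (i+1)·[v i ≤ v (i+1)] = 4 + r` and `(∑ v) % 3 = s`. -/
def Vraw (r s : ℕ) : List ℕ :=
  match r, s with
  | 0,0 => [0,2,1,2,1,0]
  | 0,1 => [0,1,0,2,1,0]
  | 0,2 => [0,2,0,2,1,0]
  | 1,0 => [1,0,2,2,1,0]
  | 1,1 => [0,2,1,0,1,0]
  | 1,2 => [0,2,1,0,2,0]
  | 2,0 => [0,0,0,2,1,0]
  | 2,1 => [0,0,1,2,1,0]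
  | 2,2 => [0,0,2,2,1,0]
  | 3,0 => [0,0,1,0,2,0]
  | 3,1 => [0,0,2,0,2,0]
  | 3,2 => [0,0,1,0,1,0]
  | 4,0 => [0,0,2,1,0,0]
  | 4,1 => [0,1,0,1,2,0]
  | 4,2 => [0,1,0,0,1,0]
  | 5,0 => [0,1,0,2,0,0]
  | 5,1 => [0,2,0,2,0,0]
  | 5,2 => [0,1,0,1,0,0]
  | 6,0 => [0,0,0,1,2,0]
  | 6,1 => [0,0,0,0,1,0]
  | 6,2 => [0,0,0,0,2,0]
  | 7,0 => [0,0,1,2,0,0]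
  | 7,1 => [0,0,0,1,0,0]
  | 7,2 => [0,0,0,2,0,0]
  | _,_ => [0,0,0,0,0,0]

def Vt (r s i : ℕ) : ℕ := min ((Vraw r s).getD i 0) 2

lemma Vt_le2 (r s i : ℕ) : Vt r s i ≤ 2 := min_le_right _ _

lemma Vt5 (r s : ℕ) (hr : r < 8) (hs : s < 3) : Vt r s 5 = 0 := by
  interval_cases r <;> interval_cases s <;> rfl

lemma Vt005 : Vt 0 0 5 = 0 := rfl

def y0v (b0 b1 : ℕ) : ℕ := if b0 = 0 then 0 else if b1 = 0 then 2 else 1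

def y1v (b0 b1 : ℕ) (e : Bool) : ℕ :=
  if e then (if b0 = 0 ∨ b1 = 0 then 0 else 1) else (if b1 = 0 then 1 else 2)

lemma y0v_le2 (b0 b1 : ℕ) : y0v b0 b1 ≤ 2 := by unfold y0v; split_ifs <;> omega

lemma y1v_le2 (b0 b1 : ℕ) (e : Bool) : y1v b0 b1 e ≤ 2 := by
  unfold y1v; cases e <;> split_ifs <;> omega

lemma T1 (b0 b1 : ℕ) (x : Bool) :
    (if y0v b0 b1 ≤ y1v b0 b1 x then (1:ℕ) else 0)
      = (if y0v b0 b1 ≤ y1v b0 b1 false then 1 else 0) := by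
  cases x <;> unfold y0v y1v <;> split_ifs <;> omega

lemma T2 (b0 b1 : ℕ) (x : Bool) :
    (if y1v b0 b1 x ≤ min b1 1 then (1:ℕ) else 0) = (if x then 1 else 0) := by
  cases x <;> unfold y1v <;> split_ifs <;> omega

lemma y0v_inj (a b a' b' : ℕ) (ha : a ≤ 1) (ha' : a' ≤ 1)
    (h : y0v a b = y0v a' b') : a = a' := by
  unfold y0v at h; split_ifs at h <;> omega

/-- branch conditions -/
abbrev c0 (t i : ℕ) : Prop := i + 2 = 2 ^ Nat.log 2 (i+2) ∧ i + 2 ≤ 2^(t-1)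
abbrev c1 (t i : ℕ) : Prop := i + 1 = 2 ^ Nat.log 2 (i+1) ∧ i + 1 ≤ 2^(t-1)
abbrev c2 (t i : ℕ) : Prop := i = 2 ^ Nat.log 2 i ∧ i ≤ 2^(t-1)

def enc (t : ℕ) (w : ℕ → ℕ) (e : ℕ → Bool) (v : ℕ → ℕ) (i : ℕ) : ℕ :=
  if i < 6 then v i
  else if c0 t i then y0v (w i) (w (i+2))
  else if c1 t i then y1v (w (i-1)) (w (i+1)) (e (Nat.log 2 (i+1) - 3))
  else if c2 t i then min (w i) 1
  else w i

def gg (t : ℕ) (w : ℕ → ℕ) (e : ℕ → Bool) (v : ℕ → ℕ) (i : ℕ) : ℕ :=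
  (i+1) * (if enc t w e v i ≤ enc t w e v (i+1) then 1 else 0)

lemma notP2 {m j : ℕ} (h1 : 2^j < m) (h2 : m < 2^(j+1)) : m ≠ 2 ^ Nat.log 2 m := by
  intro h
  have h1' : (2:ℕ)^j < 2 ^ Nat.log 2 m := h ▸ h1
  have h2' : (2:ℕ) ^ Nat.log 2 m < 2^(j+1) := h ▸ h2
  have := (Nat.pow_lt_pow_iff_right (by norm_num : 1 < 2)).mp h1'
  have := (Nat.pow_lt_pow_iff_right (by norm_num : 1 < 2)).mp h2'
  omega

lemma pow8 {j : ℕ} (h : 3 ≤ j) : 8 ≤ 2^j := by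
  calc (8:ℕ) = 2^3 := rfl
  _ ≤ 2^j := Nat.pow_le_pow_right (by norm_num) h

section enc_lemmas
variable {t : ℕ} {w : ℕ → ℕ} {e : ℕ → Bool} {v : ℕ → ℕ} {i : ℕ}

lemma enc_low (h : i < 6) : enc t w e v i = v i := if_pos h

lemma enc_y0 (h6 : 6 ≤ i) (h0 : c0 t i) : enc t w e v i = y0v (w i) (w (i+2)) := by
  unfold enc; rw [if_neg (by omega), if_pos h0]

lemma enc_y1 (h6 : 6 ≤ i) (h0 : ¬ c0 t i) (h1 : c1 t i) :
    enc t w e v i = y1v (w (i-1)) (w (i+1)) (e (Nat.log 2 (i+1) - 3)) := by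
  unfold enc; rw [if_neg (by omega), if_neg h0, if_pos h1]

lemma enc_y2 (h6 : 6 ≤ i) (h0 : ¬ c0 t i) (h1 : ¬ c1 t i) (h2 : c2 t i) :
    enc t w e v i = min (w i) 1 := by
  unfold enc; rw [if_neg (by omega), if_neg h0, if_neg h1, if_pos h2]

lemma enc_w (h6 : 6 ≤ i) (h0 : ¬ c0 t i) (h1 : ¬ c1 t i) (h2 : ¬ c2 t i) :
    enc t w e v i = w i := by
  unfold enc; rw [if_neg (by omega), if_neg h0, if_neg h1, if_neg h2]

lemma enc_ev (h6 : 6 ≤ i) (h1 : ¬ c1 t i) (e' : ℕ → Bool) (v' : ℕ → ℕ) :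
    enc t w e v i = enc t w e' v' i := by
  unfold enc; split_ifs <;> first | rfl | omega | tauto

lemma enc_vindep (h6 : 6 ≤ i) (v' : ℕ → ℕ) : enc t w e v i = enc t w e v' i := by
  unfold enc; split_ifs <;> first | rfl | omega

lemma enc_le2 (hw : ∀ p, w p ≤ 2) (hv : ∀ p, v p ≤ 2) : enc t w e v i ≤ 2 := by
  unfold enc; split_ifs
  · exact hv i
  · exact y0v_le2 _ _
  · exact y1v_le2 _ _ _
  · exact le_trans (min_le_right _ _) (by norm_num)
  · exact hw i

end enc_lemmas

/-- structural facts about block positions -/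
lemma c0_pow {t j : ℕ} (h3 : 3 ≤ j) (hj : j ≤ t-1) : c0 t (2^j - 2) := by
  have h8 := pow8 h3
  have hq : 2^j - 2 + 2 = 2^j := by omega
  constructor
  · rw [hq, Nat.log_pow (by norm_num)]
  · rw [hq]; exact Nat.pow_le_pow_right (by norm_num) hj

lemma not_c1_y0 {t j : ℕ} (h3 : 3 ≤ j) : ¬ c1 t (2^j - 2) := by
  have h8 := pow8 h3
  have h8' : 2^(j-1) ≥ 4 := by
    calc (4:ℕ) = 2^2 := rfl
    _ ≤ 2^(j-1) := Nat.pow_le_pow_right (by norm_num) (by omega)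
  have hpow : (2:ℕ)^j = 2^(j-1) * 2 := by
    rw [← pow_succ, show j-1+1 = j by omega]
  intro h
  have h1 := h.1
  rw [show 2^j - 2 + 1 = 2^j - 1 by omega] at h1
  exact notP2 (j := j-1) (by omega) (by rw [show j-1+1 = j by omega]; omega) h1

lemma c1_ym1 {t j : ℕ} (h3 : 3 ≤ j) (hj : j ≤ t-1) : c1 t (2^j - 1) := by
  have h8 := pow8 h3
  have hq : 2^j - 1 + 1 = 2^j := by omega
  constructor
  · rw [hq, Nat.log_pow (by norm_num)]
  · rw [hq]; exact Nat.pow_le_pow_right (by norm_num) hj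

lemma not_c0_ym1 {t j : ℕ} (h3 : 3 ≤ j) : ¬ c0 t (2^j - 1) := by
  have h8 := pow8 h3
  have hpow : (2:ℕ)^(j+1) = 2 * 2^j := by rw [pow_succ]; ring
  intro h
  have h1 := h.1
  rw [show 2^j - 1 + 2 = 2^j + 1 by omega] at h1
  exact notP2 (j := j) (by omega) (by omega) h1

lemma c2_y2 {t j : ℕ} (h3 : 3 ≤ j) (hj : j ≤ t-1) : c2 t (2^j) := by
  constructor
  · rw [Nat.log_pow (by norm_num)]
  · exact Nat.pow_le_pow_right (by norm_num) hj

lemma not_c0_y2 {t j : ℕ} (h3 : 3 ≤ j) : ¬ c0 t (2^j) := by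
  have h8 := pow8 h3
  have hpow : (2:ℕ)^(j+1) = 2 * 2^j := by rw [pow_succ]; ring
  intro h
  exact notP2 (j := j) (by omega) (by omega) h.1

lemma not_c1_y2 {t j : ℕ} (h3 : 3 ≤ j) : ¬ c1 t (2^j) := by
  have h8 := pow8 h3
  have hpow : (2:ℕ)^(j+1) = 2 * 2^j := by rw [pow_succ]; ring
  intro h
  exact notP2 (j := j) (by omega) (by omega) h.1

lemma c1_elim {t i : ℕ} (h6 : 6 ≤ i) (h : c1 t i) :
    ∃ j, 3 ≤ j ∧ j ≤ t-1 ∧ i = 2^j - 1 := by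
  refine ⟨Nat.log 2 (i+1), ?_, ?_, by omega⟩
  · by_contra hc
    push_neg at hc
    have : (2:ℕ) ^ Nat.log 2 (i+1) ≤ 2^2 := Nat.pow_le_pow_right (by norm_num) (by omega)
    omega
  · exact (Nat.pow_le_pow_iff_right (by norm_num : 1 < 2)).mp (h.1 ▸ h.2)

lemma c0_elim {t i : ℕ} (h6 : 6 ≤ i) (h : c0 t i) :
    ∃ j, 3 ≤ j ∧ j ≤ t-1 ∧ i = 2^j - 2 := by
  refine ⟨Nat.log 2 (i+2), ?_, ?_, by omega⟩
  · by_contra hc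
    push_neg at hc
    have : (2:ℕ) ^ Nat.log 2 (i+2) ≤ 2^2 := Nat.pow_le_pow_right (by norm_num) (by omega)
    omega
  · exact (Nat.pow_le_pow_iff_right (by norm_num : 1 < 2)).mp (h.1 ▸ h.2)

lemma c2_elim {t i : ℕ} (h6 : 6 ≤ i) (h : c2 t i) :
    ∃ j, 3 ≤ j ∧ j ≤ t-1 ∧ i = 2^j := by
  refine ⟨Nat.log 2 i, ?_, ?_, by omega⟩
  · by_contra hc
    push_neg at hc
    have : (2:ℕ) ^ Nat.log 2 i ≤ 2^2 := Nat.pow_le_pow_right (by norm_num) (by omega)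
    omega
  · exact (Nat.pow_le_pow_iff_right (by norm_num : 1 < 2)).mp (h.1 ▸ h.2)

lemma bits_sum : ∀ m u, u < 2^m → (∑ k ∈ Finset.range m, 2^k * (u.testBit k).toNat) = u := by
  intro m
  induction m with
  | zero => intro u h; simp at h ⊢; omega
  | succ m ih =>
    intro u hu
    rw [Finset.sum_range_succ']
    have h0 : (u.testBit 0).toNat = u % 2 := by
      by_cases h : u % 2 = 1 <;> simp [Nat.testBit_zero, h] <;> omega
    have hrec : ∀ k, (2:ℕ)^(k+1) * (u.testBit (k+1)).toNat
        = 2 * (2^k * ((u/2).testBit k).toNat) := by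
      intro k
      rw [show u.testBit (k+1) = (u/2).testBit k from by
        simp [Nat.testBit_succ, Nat.shiftRight_succ]]
      ring
    have hu2 : u / 2 < 2^m := by rw [pow_succ] at hu; omega
    rw [Finset.sum_congr rfl fun k _ => hrec k, ← Finset.mul_sum, ih (u/2) hu2,
      pow_zero, one_mul, h0]
    omega

end VTaux
namespace VTaux

def Ee (t : ℕ) : Finset ℕ := (Finset.range (t-3)).image fun k => 2^(k+3) - 1

lemma mem_Ee {t i : ℕ} : i ∈ Ee t ↔ ∃ k, k < t-3 ∧ i = 2^(k+3) - 1 := by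
  simp [Ee, eq_comm]

lemma range_split (m n : ℕ) (h : m ≤ n) (f : ℕ → ℕ) :
    ∑ i ∈ Finset.range n, f i
      = ∑ i ∈ Finset.range m, f i + ∑ i ∈ Finset.Ico m n, f i := by
  rw [Finset.range_eq_Ico, Finset.range_eq_Ico]
  exact (Finset.sum_Ico_consecutive f (Nat.zero_le m) h).symm

section decomp
variable {t n : ℕ} {w : ℕ → ℕ}

/-- the base parameters -/
noncomputable def e0 : ℕ → Bool := fun _ => false
noncomputable def v0 : ℕ → ℕ := Vt 0 0

lemma gg_agree (e : ℕ → Bool) (v : ℕ → ℕ) (hv5 : v 5 = 0) (i : ℕ)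
    (hi5 : 5 ≤ i) (hiE : i ∉ Ee t) :
    gg t w e v i = gg t w e0 v0 i := by
  rcases eq_or_lt_of_le hi5 with h5 | h6'
  · -- i = 5 : both sides are 6
    have l1 : gg t w e v 5 = 6 := by
      unfold gg
      rw [enc_low (show (5:ℕ) < 6 by norm_num), hv5]
      simp
    have l2 : gg t w e0 v0 5 = 6 := by
      unfold gg
      rw [enc_low (show (5:ℕ) < 6 by norm_num), show v0 5 = 0 from rfl]
      simp
    rw [← h5, l1, l2]
  · have h6 : 6 ≤ i := h6'
    have hnc1 : ¬ c1 t i := by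
      intro hc1
      obtain ⟨j, hj3, hjt, hij⟩ := c1_elim h6 hc1
      exact hiE (mem_Ee.2 ⟨j - 3, by omega, by rw [show j-3+3 = j by omega]; exact hij⟩)
    by_cases hc1' : c1 t (i+1)
    · -- i+1 is a y1 position, i.e. i = 2^j - 2
      obtain ⟨j, hj3, hjt, hij⟩ := c1_elim (by omega) hc1'
      have h8 := pow8 hj3
      obtain rfl : i = 2^j - 2 := by omega
      have hc0 : c0 t (2^j - 2) := c0_pow hj3 hjt
      unfold gg
      rw [enc_y0 h6 hc0, enc_y0 h6 hc0,
        show 2^j - 2 + 1 = 2^j - 1 by omega,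
        enc_y1 (by omega) (not_c0_ym1 hj3) (c1_ym1 hj3 hjt),
        enc_y1 (by omega) (not_c0_ym1 hj3) (c1_ym1 hj3 hjt),
        show 2^j - 1 + 1 = 2^j by omega, show 2^j - 1 - 1 = 2^j - 2 by omega,
        Nat.log_pow (by norm_num), show 2^j - 2 + 2 = 2^j by omega]
      rw [T1 (w (2^j-2)) (w (2^j)) (e (j-3))]
      rfl
    · unfold gg
      rw [enc_ev h6 hnc1 e0 v0, enc_ev (by omega) hc1' e0 v0]

lemma gg_E (e : ℕ → Bool) (v : ℕ → ℕ) (k : ℕ) (h3t : 3 ≤ t) (hk : k < t-3) :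
    gg t w e v (2^(k+3) - 1) = 2^(k+3) * (e k).toNat := by
  set j := k + 3 with hj
  have hj3 : 3 ≤ j := by omega
  have hjt : j ≤ t - 1 := by omega
  have h8 := pow8 hj3
  unfold gg
  rw [enc_y1 (by omega) (not_c0_ym1 hj3) (c1_ym1 hj3 hjt),
    show 2^j - 1 + 1 = 2^j by omega, show 2^j - 1 - 1 = 2^j - 2 by omega,
    Nat.log_pow (by norm_num),
    enc_y2 (by omega) (not_c0_y2 hj3) (not_c1_y2 hj3) (c2_y2 hj3 hjt),
    T2 (w (2^j - 2)) (w (2^j)) (e (j-3)),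
    show j - 3 = k by omega]
  cases e k <;> simp

lemma Ee_subset (h3t : 3 ≤ t) (hn1 : 2^(t-1) < n) : Ee t ⊆ Finset.Ico 5 (n-1) := by
  intro i hi
  obtain ⟨k, hk, rfl⟩ := mem_Ee.1 hi
  have h8 := pow8 (show 3 ≤ k+3 by omega)
  have hle : (2:ℕ)^(k+3) ≤ 2^(t-1) := Nat.pow_le_pow_right (by norm_num) (by omega)
  exact Finset.mem_Ico.2 ⟨by omega, by omega⟩

lemma syn_decomp (e : ℕ → Bool) (v : ℕ → ℕ) (hv5 : v 5 = 0)
    (h3t : 3 ≤ t) (hn6 : 6 ≤ n) (hn1 : 2^(t-1) < n) :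
    ∑ i ∈ Finset.range (n-1), gg t w e v i
      = (∑ i ∈ Finset.range 5, gg t w e v i)
        + ((∑ i ∈ Finset.Ico 5 (n-1) \ Ee t, gg t w e0 v0 i)
          + ∑ k ∈ Finset.range (t-3), 2^(k+3) * (e k).toNat) := by
  have hEsub := Ee_subset (n := n) h3t hn1
  rw [range_split 5 (n-1) (by omega)]
  congr 1
  rw [← Finset.sum_sdiff hEsub]
  congr 1
  · refine Finset.sum_congr rfl fun i hi => ?_
    rw [Finset.mem_sdiff, Finset.mem_Ico] at hi
    exact gg_agree e v hv5 i hi.1.1 hi.2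
  · rw [Ee, Finset.sum_image]
    · exact Finset.sum_congr rfl fun k hk =>
        gg_E e v k h3t (Finset.mem_range.1 hk)
    · intro x hx y hy hxy
      have h8x := pow8 (show 3 ≤ x+3 by omega)
      have h8y := pow8 (show 3 ≤ y+3 by omega)
      have hp : (2:ℕ)^(x+3) = 2^(y+3) := by simp only at hxy; omega
      have := Nat.pow_right_injective (le_refl 2) hp
      omega

lemma sum_low (e : ℕ → Bool) (r s : ℕ) (hr : r < 8) (hs : s < 3) :
    ∑ i ∈ Finset.range 5, gg t w e (Vt r s) i = 4 + r := by
  have h : ∀ i ∈ Finset.range 5, gg t w e (Vt r s) i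
      = (i+1) * (if Vt r s i ≤ Vt r s (i+1) then 1 else 0) := by
    intro i hi
    simp only [Finset.mem_range] at hi
    unfold gg
    rw [enc_low (by omega), enc_low (by omega)]
  rw [Finset.sum_congr rfl h]
  interval_cases r <;> interval_cases s <;> decide

lemma qsum_decomp (e : ℕ → Bool) (v : ℕ → ℕ) (hn6 : 6 ≤ n) :
    ∑ i ∈ Finset.range n, enc t w e v i
      = (∑ i ∈ Finset.range 6, v i) + ∑ i ∈ Finset.Ico 6 n, enc t w e v0 i := by
  have h1 : ∑ i ∈ Finset.range 6, enc t w e v i = ∑ i ∈ Finset.range 6, v i :=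
    Finset.sum_congr rfl fun i hi => enc_low (Finset.mem_range.1 hi)
  have h2 : ∑ i ∈ Finset.Ico 6 n, enc t w e v i
      = ∑ i ∈ Finset.Ico 6 n, enc t w e v0 i :=
    Finset.sum_congr rfl fun i hi => enc_vindep (Finset.mem_Ico.1 hi).1 v0
  rw [range_split 6 n (by omega), h1, h2]

lemma sum_V (r s : ℕ) (hr : r < 8) (hs : s < 3) :
    (∑ i ∈ Finset.range 6, Vt r s i) % 3 = s := by
  interval_cases r <;> interval_cases s <;> decide

lemma main_exists {a b : ℕ} (h3t : 3 ≤ t) (hn6 : 6 ≤ n) (hn1 : 2^(t-1) < n)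
    (hn2 : n ≤ 2^t) (ha : a < n) (hb : b < 3) (w : ℕ → ℕ) :
    ∃ (e : ℕ → Bool) (r s : ℕ), r < 8 ∧ s < 3 ∧
      (∑ i ∈ Finset.range (n-1), gg t w e (Vt r s) i) % n = a ∧
      (∑ i ∈ Finset.range n, enc t w e (Vt r s) i) % 3 = b := by
  set A := ∑ i ∈ Finset.Ico 5 (n-1) \ Ee t, gg (t := t) (w := w) e0 v0 i with hA
  set M := (4 + A) % n with hM
  have hMlt : M < n := Nat.mod_lt _ (by omega)
  set D := (a + n - M) % n with hD
  have hDlt : D < n := Nat.mod_lt _ (by omega)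
  set r := D % 8 with hr
  set u := D / 8 with hu
  have hult : u < 2^(t-3) := by
    have h2t : (2:ℕ)^t = 2^(t-3) * 8 := by
      conv_lhs => rw [show t = (t-3)+3 by omega]
      rw [pow_add]
      norm_num
    have hD8 : D < 2^(t-3) * 8 := by omega
    omega
  set e := fun k => u.testBit k with he
  have hbits : ∑ k ∈ Finset.range (t-3), 2^(k+3) * (e k).toNat = 8 * u := by
    have hterm : ∀ k ∈ Finset.range (t-3), 2^(k+3) * (e k).toNat
        = 8 * (2^k * (u.testBit k).toNat) := by
      intro k _
      rw [pow_add, show (2:ℕ)^3 = 8 from rfl]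
      ring
    rw [Finset.sum_congr rfl hterm, ← Finset.mul_sum, bits_sum (t-3) u hult]
  set R := ∑ i ∈ Finset.Ico 6 n, enc t w e v0 i with hR
  set s := (b + 3 - R % 3) % 3 with hs
  have hrlt : r < 8 := Nat.mod_lt _ (by norm_num)
  have hslt : s < 3 := Nat.mod_lt _ (by norm_num)
  refine ⟨e, r, s, hrlt, hslt, ?_, ?_⟩
  · rw [syn_decomp e (Vt r s) (Vt5 r s hrlt hslt) h3t hn6 hn1,
      sum_low e r s hrlt hslt, ← hA, hbits]
    have hru : r + 8 * u = D := by omega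
    rw [show 4 + r + (A + 8 * u) = (4 + A) + (r + 8 * u) by ring, hru,
      ← Nat.mod_add_mod, ← hM, hD, Nat.add_mod_mod,
      show M + (a + n - M) = a + n by omega, Nat.add_mod_right]
    exact Nat.mod_eq_of_lt ha
  · rw [qsum_decomp e (Vt r s) hn6, ← hR]
    have h6 := sum_V r s hrlt hslt
    omega

end decomp
end VTaux
namespace VTaux

def wlift (n : ℕ) (x : Fin n → Fin 3) : ℕ → ℕ :=
  fun p => if h : p < n then (x ⟨p, h⟩ : ℕ) else 0

lemma wlift_le2 (n : ℕ) (x : Fin n → Fin 3) (p : ℕ) : wlift n x p ≤ 2 := by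
  unfold wlift
  split_ifs with h
  · exact Nat.lt_succ_iff.1 (x ⟨p, h⟩).isLt
  · omega

lemma wlift_val (n : ℕ) (x : Fin n → Fin 3) (i : Fin n) :
    wlift n x i.val = (x i : ℕ) := by
  unfold wlift
  rw [dif_pos i.isLt]

def Tt (n t : ℕ) : Fin n → Finset (Fin 3) := fun i =>
  if (i : ℕ) < 6 ∨ c1 t i then {0}
  else if c0 t i ∨ c2 t i then {0, 1}
  else Finset.univ

def cT (t p : ℕ) : ℕ :=
  if p < 6 ∨ c1 t p then 1 else if c0 t p ∨ c2 t p then 2 else 3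

lemma Tt_card (n t : ℕ) (i : Fin n) : (Tt n t i).card = cT t i.val := by
  unfold Tt cT
  split_ifs <;> rfl

lemma pow_lin : ∀ u, 4 ≤ u → 3*u ≤ 2^(u-1) + 4 := by
  intro u
  induction u with
  | zero => omega
  | succ k ih =>
    intro hk
    rcases Nat.lt_or_ge k 4 with h | h
    · obtain rfl : k = 3 := by omega
      norm_num
    · have h1 := ih h
      have h2 : 8 ≤ 2^(k-1) := pow8 (by omega)
      have h3 : (2:ℕ)^k = 2^(k-1) * 2 := by
        rw [← pow_succ, show k-1+1 = k by omega]
      rw [show k+1-1 = k by omega]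
      omega

lemma prod_cT (t n : ℕ) (h3t : 3 ≤ t) (hn6 : 6 ≤ n) (hn1 : 2^(t-1) < n)
    (h3tn : 3*t ≤ n+3) :
    ∏ p ∈ Finset.range n, cT t p = 2^(2*(t-3)) * 3^(n+3-3*t) := by
  classical
  set P : ℕ → Prop := fun p => p < 6 ∨ c1 t p with hP
  set Q : ℕ → Prop := fun p => c0 t p ∨ c2 t p with hQ
  -- the three classes
  have hS1 : (Finset.range n).filter P
      = Finset.range 6 ∪ (Finset.range (t-3)).image (fun k => 2^(k+3) - 1) := by
    ext p
    simp only [Finset.mem_filter, Finset.mem_range, Finset.mem_union, Finset.mem_image, hP]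
    constructor
    · rintro ⟨hpn, hp6 | hc1⟩
      · exact Or.inl hp6
      · rcases Nat.lt_or_ge p 6 with h6 | h6
        · exact Or.inl h6
        · obtain ⟨j, hj3, hjt, rfl⟩ := c1_elim h6 hc1
          exact Or.inr ⟨j - 3, by omega, by rw [show j-3+3 = j by omega]⟩
    · rintro (h6 | ⟨k, hk, rfl⟩)
      · exact ⟨by omega, Or.inl h6⟩
      · have h8 := pow8 (show 3 ≤ k+3 by omega)
        have hle : (2:ℕ)^(k+3) ≤ 2^(t-1) :=
          Nat.pow_le_pow_right (by norm_num) (by omega)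
        exact ⟨by omega, Or.inr (c1_ym1 (by omega) (by omega))⟩
  have hS2 : ((Finset.range n).filter fun p => ¬ P p).filter Q
      = ((Finset.range (t-3)).image fun k => 2^(k+3) - 2)
        ∪ ((Finset.range (t-3)).image fun k => 2^(k+3)) := by
    ext p
    simp only [Finset.mem_filter, Finset.mem_range, Finset.mem_union, Finset.mem_image,
      hP, hQ, not_or]
    constructor
    · rintro ⟨⟨hpn, h6, hc1⟩, hc0 | hc2⟩
      · obtain ⟨j, hj3, hjt, rfl⟩ := c0_elim (by omega) hc0
        exact Or.inl ⟨j - 3, by omega, by rw [show j-3+3 = j by omega]⟩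
      · obtain ⟨j, hj3, hjt, rfl⟩ := c2_elim (by omega) hc2
        exact Or.inr ⟨j - 3, by omega, by rw [show j-3+3 = j by omega]⟩
    · rintro (⟨k, hk, rfl⟩ | ⟨k, hk, rfl⟩)
      · have h8 := pow8 (show 3 ≤ k+3 by omega)
        have hle : (2:ℕ)^(k+3) ≤ 2^(t-1) :=
          Nat.pow_le_pow_right (by norm_num) (by omega)
        exact ⟨⟨by omega, by omega, not_c1_y0 (by omega)⟩,
          Or.inl (c0_pow (by omega) (by omega))⟩
      · have h8 := pow8 (show 3 ≤ k+3 by omega)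
        have hle : (2:ℕ)^(k+3) ≤ 2^(t-1) :=
          Nat.pow_le_pow_right (by norm_num) (by omega)
        exact ⟨⟨by omega, by omega, not_c1_y2 (by omega)⟩,
          Or.inr (c2_y2 (by omega) (by omega))⟩
  -- cardinalities
  have hinj1 : ∀ x ∈ Finset.range (t-3), ∀ y ∈ Finset.range (t-3),
      2^(x+3) - 1 = 2^(y+3) - 1 → x = y := by
    intro x _ y _ hxy
    have h8x := pow8 (show 3 ≤ x+3 by omega)
    have h8y := pow8 (show 3 ≤ y+3 by omega)
    have hp : (2:ℕ)^(x+3) = 2^(y+3) := by omega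
    have := Nat.pow_right_injective (le_refl 2) hp
    omega
  have hinj2 : ∀ x ∈ Finset.range (t-3), ∀ y ∈ Finset.range (t-3),
      2^(x+3) - 2 = 2^(y+3) - 2 → x = y := by
    intro x _ y _ hxy
    have h8x := pow8 (show 3 ≤ x+3 by omega)
    have h8y := pow8 (show 3 ≤ y+3 by omega)
    have hp : (2:ℕ)^(x+3) = 2^(y+3) := by omega
    have := Nat.pow_right_injective (le_refl 2) hp
    omega
  have hinj3 : ∀ x ∈ Finset.range (t-3), ∀ y ∈ Finset.range (t-3),
      (2:ℕ)^(x+3) = 2^(y+3) → x = y := by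
    intro x _ y _ hxy
    have := Nat.pow_right_injective (le_refl 2) hxy
    omega
  have hcard1 : ((Finset.range n).filter P).card = 6 + (t-3) := by
    rw [hS1, Finset.card_union_of_disjoint, Finset.card_range,
      Finset.card_image_of_injOn hinj1, Finset.card_range]
    rw [Finset.disjoint_left]
    rintro p hp hq
    obtain ⟨k, hk, rfl⟩ := Finset.mem_image.1 hq
    have h8 := pow8 (show 3 ≤ k+3 by omega)
    rw [Finset.mem_range] at hp
    omega
  have hcard2 : (((Finset.range n).filter fun p => ¬ P p).filter Q).card
      = 2*(t-3) := by
    rw [hS2, Finset.card_union_of_disjoint, Finset.card_image_of_injOn hinj2,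
      Finset.card_image_of_injOn hinj3, Finset.card_range]
    · omega
    · rw [Finset.disjoint_left]
      rintro p hp hq
      obtain ⟨k, hk, rfl⟩ := Finset.mem_image.1 hp
      obtain ⟨k', hk', heq⟩ := Finset.mem_image.1 hq
      have h1 : (2:ℕ)^(k+3) = 8 * 2^k := by
        rw [pow_add, show (2:ℕ)^3 = 8 from rfl]; ring
      have h2 : (2:ℕ)^(k'+3) = 8 * 2^k' := by
        rw [pow_add, show (2:ℕ)^3 = 8 from rfl]; ring
      have h3 : 1 ≤ (2:ℕ)^k := Nat.one_le_two_pow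
      have h4 : 1 ≤ (2:ℕ)^k' := Nat.one_le_two_pow
      omega
  have htot1 : ((Finset.range n).filter P).card
      + ((Finset.range n).filter fun p => ¬ P p).card = n := by
    rw [Finset.card_filter_add_card_filter_not, Finset.card_range]
  have htot2 : (((Finset.range n).filter fun p => ¬ P p).filter Q).card
      + (((Finset.range n).filter fun p => ¬ P p).filter fun p => ¬ Q p).card
      = ((Finset.range n).filter fun p => ¬ P p).card := by
    rw [Finset.card_filter_add_card_filter_not]
  have hcard3 : (((Finset.range n).filter fun p => ¬ P p).filter fun p => ¬ Q p).card
      = n + 3 - 3*t := by omega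
  -- now compute product
  rw [← Finset.prod_filter_mul_prod_filter_not (Finset.range n) P (cT t),
    ← Finset.prod_filter_mul_prod_filter_not
      ((Finset.range n).filter fun p => ¬ P p) Q (cT t)]
  have e1 : ∀ p ∈ (Finset.range n).filter P, cT t p = 1 := by
    intro p hp
    rw [Finset.mem_filter] at hp
    unfold cT
    rw [if_pos hp.2]
  have e2 : ∀ p ∈ ((Finset.range n).filter fun p => ¬ P p).filter Q, cT t p = 2 := by
    intro p hp
    rw [Finset.mem_filter, Finset.mem_filter] at hp
    unfold cT
    rw [if_neg hp.1.2, if_pos hp.2]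
  have e3 : ∀ p ∈ ((Finset.range n).filter fun p => ¬ P p).filter fun p => ¬ Q p,
      cT t p = 3 := by
    intro p hp
    rw [Finset.mem_filter, Finset.mem_filter] at hp
    unfold cT
    rw [if_neg hp.1.2, if_neg hp.2]
  rw [Finset.prod_congr rfl e1, Finset.prod_congr rfl e2, Finset.prod_congr rfl e3,
    Finset.prod_const, Finset.prod_const, Finset.prod_const, one_pow, one_mul,
    hcard2, hcard3, show 2*(t-3) = 2*(t-3) from rfl]

end VTaux

theorem vt_ternary_card_lower_bound (n : ℕ) (hn : 6 ≤ n)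
    (t : ℕ) (ht : t = Nat.clog 2 n)
    (a b : ℕ) (ha : a ≤ n - 1) (hb : b < 3) :
    2 ^ (2 * (t - 3)) * 3 ^ (n + 3 - 3 * t) ≤ (VTq n 3 a b).card := by
  classical
  have hc6 : Nat.clog 2 6 = 3 := by norm_num [Nat.clog]
  have h3t : 3 ≤ t := by
    rw [ht, ← hc6]
    exact Nat.clog_mono_right 2 hn
  have hn1 : 2^(t-1) < n := by
    rw [ht]
    exact Nat.pow_pred_clog_lt_self (by norm_num) (by omega)
  have hn2 : n ≤ 2^t := by
    rw [ht]
    exact Nat.le_pow_clog (by norm_num) n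
  have han : a < n := by omega
  have h3tn : 3*t ≤ n+3 := by
    rcases Nat.lt_or_ge t 4 with h | h
    · omega
    · have := VTaux.pow_lin t h
      omega
  -- choose parameters for every data word x
  choose e r s hr hs hsyn hsum using fun x : Fin n → Fin 3 =>
    VTaux.main_exists (t := t) (n := n) h3t hn hn1 hn2 han hb (VTaux.wlift n x)
  set Φ : (Fin n → Fin 3) → (Fin n → Fin 3) := fun x i =>
    ⟨VTaux.enc t (VTaux.wlift n x) (e x) (VTaux.Vt (r x) (s x)) i.val, by
      have := VTaux.enc_le2 (t := t) (w := VTaux.wlift n x) (e := e x)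
        (v := VTaux.Vt (r x) (s x)) (i := i.val)
        (VTaux.wlift_le2 n x) (fun p => VTaux.Vt_le2 _ _ _)
      omega⟩ with hΦ
  have hmem : ∀ x, Φ x ∈ VTq n 3 a b := by
    intro x
    rw [VTq, Finset.mem_filter]
    refine ⟨Finset.mem_univ _, ?_, ?_⟩
    · unfold qsyn
      have hconv : (∑ i : Fin (n-1), (i.val + 1) *
          (if Φ x ⟨i.val, by have := i.isLt; omega⟩
              ≤ Φ x ⟨i.val + 1, by have := i.isLt; omega⟩ then 1 else 0))
          = ∑ p ∈ Finset.range (n-1),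
            VTaux.gg t (VTaux.wlift n x) (e x) (VTaux.Vt (r x) (s x)) p := by
        rw [← Fin.sum_univ_eq_sum_range
          (fun p => VTaux.gg t (VTaux.wlift n x) (e x) (VTaux.Vt (r x) (s x)) p) (n-1)]
        refine Finset.sum_congr rfl fun i _ => ?_
        simp only [hΦ, Fin.mk_le_mk]
        rfl
      rw [hconv]
      exact hsyn x
    · unfold qsum
      have hconv : (∑ i : Fin n, ((Φ x i : Fin 3) : ℕ))
          = ∑ p ∈ Finset.range n,
            VTaux.enc t (VTaux.wlift n x) (e x) (VTaux.Vt (r x) (s x)) p := by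
        rw [← Fin.sum_univ_eq_sum_range
          (fun p => VTaux.enc t (VTaux.wlift n x) (e x) (VTaux.Vt (r x) (s x)) p) n]
      rw [hconv]
      exact hsum x
  have hinj : Set.InjOn Φ (Fintype.piFinset (VTaux.Tt n t)) := by
    intro x hx y hy hxy
    have hx' : ∀ i, x i ∈ VTaux.Tt n t i :=
      fun i => (Fintype.mem_piFinset.1 (Finset.mem_coe.1 hx)) i
    have hy' : ∀ i, y i ∈ VTaux.Tt n t i :=
      fun i => (Fintype.mem_piFinset.1 (Finset.mem_coe.1 hy)) i
    funext i
    have hv : VTaux.enc t (VTaux.wlift n x) (e x) (VTaux.Vt (r x) (s x)) i.val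
        = VTaux.enc t (VTaux.wlift n y) (e y) (VTaux.Vt (r y) (s y)) i.val := by
      have := congrFun hxy i
      simpa [hΦ, Fin.ext_iff] using this
    by_cases hP : (i : ℕ) < 6 ∨ VTaux.c1 t i.val
    · have h1 := hx' i
      have h2 := hy' i
      rw [VTaux.Tt, if_pos hP] at h1 h2
      rw [Finset.mem_singleton.1 h1, Finset.mem_singleton.1 h2]
    · push_neg at hP
      obtain ⟨h6', hnc1⟩ := hP
      have h6 : 6 ≤ i.val := by omega
      by_cases hc0 : VTaux.c0 t i.val
      · have h1 := hx' i
        have h2 := hy' i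
        rw [VTaux.Tt, if_neg (by push_neg; exact ⟨h6', hnc1⟩),
          if_pos (Or.inl hc0)] at h1 h2
        have hx1 : (x i : ℕ) ≤ 1 := by
          rcases Finset.mem_insert.1 h1 with h | h
          · rw [h]; norm_num
          · rw [Finset.mem_singleton.1 h]; norm_num
        have hy1 : (y i : ℕ) ≤ 1 := by
          rcases Finset.mem_insert.1 h2 with h | h
          · rw [h]; norm_num
          · rw [Finset.mem_singleton.1 h]; norm_num
        rw [VTaux.enc_y0 h6 hc0, VTaux.enc_y0 h6 hc0, VTaux.wlift_val, VTaux.wlift_val] at hv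
        exact Fin.ext (VTaux.y0v_inj _ _ _ _ hx1 hy1 hv)
      · by_cases hc2 : VTaux.c2 t i.val
        · have h1 := hx' i
          have h2 := hy' i
          rw [VTaux.Tt, if_neg (by push_neg; exact ⟨h6', hnc1⟩),
            if_pos (Or.inr hc2)] at h1 h2
          have hx1 : (x i : ℕ) ≤ 1 := by
            rcases Finset.mem_insert.1 h1 with h | h
            · rw [h]; norm_num
            · rw [Finset.mem_singleton.1 h]; norm_num
          have hy1 : (y i : ℕ) ≤ 1 := by
            rcases Finset.mem_insert.1 h2 with h | h
            · rw [h]; norm_num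
            · rw [Finset.mem_singleton.1 h]; norm_num
          rw [VTaux.enc_y2 h6 hc0 hnc1 hc2, VTaux.enc_y2 h6 hc0 hnc1 hc2,
            VTaux.wlift_val, VTaux.wlift_val, Nat.min_eq_left hx1,
            Nat.min_eq_left hy1] at hv
          exact Fin.ext hv
        · rw [VTaux.enc_w h6 hc0 hnc1 hc2, VTaux.enc_w h6 hc0 hnc1 hc2,
            VTaux.wlift_val, VTaux.wlift_val] at hv
          exact Fin.ext hv
  have hsub : (Fintype.piFinset (VTaux.Tt n t)).image Φ ⊆ VTq n 3 a b := by
    intro S hS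
    obtain ⟨x, hx, rfl⟩ := Finset.mem_image.1 hS
    exact hmem x
  have hcardD : (Fintype.piFinset (VTaux.Tt n t)).card
      = 2^(2*(t-3)) * 3^(n+3-3*t) := by
    rw [Fintype.card_piFinset]
    calc ∏ i : Fin n, (VTaux.Tt n t i).card
        = ∏ i : Fin n, VTaux.cT t i.val :=
          Finset.prod_congr rfl fun i _ => VTaux.Tt_card n t i
      _ = ∏ p ∈ Finset.range n, VTaux.cT t p :=
          Fin.prod_univ_eq_prod_range _ _
      _ = 2^(2*(t-3)) * 3^(n+3-3*t) := VTaux.prod_cT t n h3t hn hn1 h3tn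
  calc 2^(2*(t-3)) * 3^(n+3-3*t)
      = (Fintype.piFinset (VTaux.Tt n t)).card := hcardD.symm
    _ = ((Fintype.piFinset (VTaux.Tt n t)).image Φ).card :=
        (Finset.card_image_of_injOn hinj).symm
    _ ≤ (VTq n 3 a b).card := Finset.card_le_card hsub
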